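/- Let k ≥ 1 and consider the following instance on 2k vertices v_1, …, v_{2k}: G contains a path of edges of weight 1 between consecutive vertices v_1, v_2, …, v_{k+1} (together with an arbitrary graph of maximum degree at most a constant D and at least one edge on {v_{k+1}, …, v_{2k}}), and H is the complete graph on the k+1 vertices {v_1, v_{k+1}, v_{k+2}, …, v_{2k}}. Then the vector x defined by x_{v_i} = i/k for i ≤ k and x_{v_i} = 1 for i > k satisfies: Σ_{i,j} G(v_i,v_j)·|x_{v_i} − x_{v_j}|² ≤ C₁/k for the path-edge contribution plus zero from edges inside {v_{k+1},…,v_{2k}}, Σ_{i,j} H(v_i,v_j)·|x_{v_i} − x_{v_j}|² ≥ c₂·k, G_tot ≤ C₃·k, and H_tot ≥ c₄·k², so the spectral relaxation value (Σ Ḡ(u,v)(x_u−x_v)²)/(Σ H̄(u,v)(x_u−x_v)²) is at most C/k for a universal constant C depending only on D. -/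

import Mathlib

open Finset

noncomputable def Gm (k : ℕ) (G0 : Fin (2 * k) → Fin (2 * k) → ℝ) : Fin (2 * k) → Fin (2 * k) → ℝ :=
  fun i j =>
    (if (i.val + 1 = j.val ∧ i.val < k) ∨ (j.val + 1 = i.val ∧ j.val < k)
      then (1 : ℝ) else 0) + G0 i j

noncomputable def Hm (k : ℕ) : Fin (2 * k) → Fin (2 * k) → ℝ :=
  fun i j => if i ≠ j ∧ (i.val = 0 ∨ k ≤ i.val) ∧ (j.val = 0 ∨ k ≤ j.val) then (1 : ℝ) else 0

noncomputable def xm (k : ℕ) : Fin (2 * k) → ℝ := fun i => if i.val < k then ((i.val : ℝ) + 1) / k else 1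

lemma sum_ite_le_one {n : ℕ} (p : Fin n → Prop) [DecidablePred p]
    (hp : ∀ a b, p a → p b → a = b) :
    ∑ j : Fin n, (if p j then (1 : ℝ) else 0) ≤ 1 := by
  rw [Finset.sum_boole]
  have h : (Finset.univ.filter p).card ≤ 1 :=
    Finset.card_le_one.mpr fun a ha b hb =>
      hp a b (Finset.mem_filter.mp ha).2 (Finset.mem_filter.mp hb).2
  exact_mod_cast h

lemma count_ge (k : ℕ) (c : ℝ) :
    ∑ j : Fin (2 * k), (if k ≤ (j : ℕ) then c else 0) = k * c := by
  rw [Fin.sum_univ_eq_sum_range (fun m => if k ≤ m then c else 0) (2 * k)]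
  rw [Finset.sum_ite, Finset.sum_const, Finset.sum_const_zero, add_zero]
  have h : (Finset.range (2 * k)).filter (fun m => k ≤ m) = Finset.Ico k (2 * k) := by
    ext m; simp [Finset.mem_Ico]; omega
  rw [h, Nat.card_Ico, nsmul_eq_mul]
  congr 1
  have : 2 * k - k = k := by omega
  rw [this]

lemma count_lt (k : ℕ) (c : ℝ) :
    ∑ j : Fin (2 * k), (if (j : ℕ) < k then c else 0) = k * c := by
  rw [Fin.sum_univ_eq_sum_range (fun m => if m < k then c else 0) (2 * k)]
  rw [Finset.sum_ite, Finset.sum_const, Finset.sum_const_zero, add_zero]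
  have h : (Finset.range (2 * k)).filter (fun m => m < k) = Finset.range k := by
    ext m; simp; omega
  rw [h, Finset.card_range, nsmul_eq_mul]

lemma xm_one {k : ℕ} (i : Fin (2 * k)) (h : k ≤ (i : ℕ)) : xm k i = 1 := by
  unfold xm; rw [if_neg (by omega)]

lemma xm_diff {k : ℕ} (hk : 1 ≤ k) (i j : Fin (2 * k))
    (h : (i : ℕ) + 1 = (j : ℕ) ∧ (i : ℕ) < k) : |xm k i - xm k j| ^ 2 ≤ 1 / (k : ℝ) ^ 2 := by
  have hkpos : (0 : ℝ) < k := by exact_mod_cast hk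
  have hxi : xm k i = (((i : ℕ) : ℝ) + 1) / k := by unfold xm; rw [if_pos h.2]
  by_cases hj : (j : ℕ) < k
  · have hxj : xm k j = (((j : ℕ) : ℝ) + 1) / k := by unfold xm; rw [if_pos hj]
    have hji : ((j : ℕ) : ℝ) = ((i : ℕ) : ℝ) + 1 := by exact_mod_cast h.1.symm
    have hd : xm k i - xm k j = -(1 / k) := by rw [hxi, hxj, hji]; ring
    rw [hd, abs_neg, abs_of_nonneg (by positivity)]
    rw [div_pow, one_pow]
  · have hxj : xm k j = 1 := xm_one j (by omega)
    have hik : (i : ℕ) + 1 = k := by omega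
    have hd : xm k i - xm k j = 0 := by
      rw [hxi, hxj]
      have : ((i : ℕ) : ℝ) + 1 = (k : ℝ) := by exact_mod_cast hik
      rw [this, div_self (ne_of_gt hkpos)]; ring
    rw [hd, abs_zero]
    have h0 : ((0:ℝ)) ^ 2 = 0 := by norm_num
    rw [h0]
    positivity

lemma G0_nonneg {k : ℕ} (G0 : Fin (2 * k) → Fin (2 * k) → ℝ)
    (h01 : ∀ i j, G0 i j = 0 ∨ G0 i j = 1) : ∀ i j, 0 ≤ G0 i j := by
  intro i j; rcases h01 i j with h | h <;> simp [h]

lemma num_le {k : ℕ} (hk : 1 ≤ k) (G0 : Fin (2 * k) → Fin (2 * k) → ℝ)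
    (hsupp : ∀ i j, G0 i j ≠ 0 → k ≤ (i : ℕ) ∧ k ≤ (j : ℕ)) :
    ∑ i, ∑ j, Gm k G0 i j * |xm k i - xm k j| ^ 2 ≤ 4 / (k : ℝ) := by
  have hkpos : (0 : ℝ) < k := by exact_mod_cast hk
  have hpt : ∀ i j : Fin (2 * k), Gm k G0 i j * |xm k i - xm k j| ^ 2 ≤
      ((if (j : ℕ) = (i : ℕ) + 1 then (1 : ℝ) else 0) +
        (if (i : ℕ) = (j : ℕ) + 1 then (1 : ℝ) else 0)) * (1 / (k : ℝ) ^ 2) := by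
    intro i j
    have hG0part : G0 i j * |xm k i - xm k j| ^ 2 = 0 := by
      by_cases h0 : G0 i j = 0
      · rw [h0, zero_mul]
      · obtain ⟨hi, hj⟩ := hsupp i j h0
        rw [xm_one i hi, xm_one j hj]; simp
    unfold Gm
    rw [add_mul, hG0part, add_zero]
    by_cases hc : ((i : ℕ) + 1 = (j : ℕ) ∧ (i : ℕ) < k) ∨ ((j : ℕ) + 1 = (i : ℕ) ∧ (j : ℕ) < k)
    · rw [if_pos hc, one_mul]
      rcases hc with h | h
      · have h2 := xm_diff hk i j h
        have h3 : (if (j : ℕ) = (i : ℕ) + 1 then (1 : ℝ) else 0) = 1 := if_pos h.1.symm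
        have h4 : (0 : ℝ) ≤ if (i : ℕ) = (j : ℕ) + 1 then (1 : ℝ) else 0 := by positivity
        have h5 : (0 : ℝ) < 1 / (k : ℝ) ^ 2 := by positivity
        nlinarith
      · have h2 := xm_diff hk j i h
        rw [abs_sub_comm] at h2
        have h3 : (if (i : ℕ) = (j : ℕ) + 1 then (1 : ℝ) else 0) = 1 := if_pos h.1.symm
        have h4 : (0 : ℝ) ≤ if (j : ℕ) = (i : ℕ) + 1 then (1 : ℝ) else 0 := by positivity
        have h5 : (0 : ℝ) < 1 / (k : ℝ) ^ 2 := by positivity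
        nlinarith
    · rw [if_neg hc, zero_mul]
      positivity
  calc ∑ i, ∑ j, Gm k G0 i j * |xm k i - xm k j| ^ 2
      ≤ ∑ i : Fin (2 * k), ∑ j : Fin (2 * k),
          ((if (j : ℕ) = (i : ℕ) + 1 then (1 : ℝ) else 0) +
            (if (i : ℕ) = (j : ℕ) + 1 then (1 : ℝ) else 0)) * (1 / (k : ℝ) ^ 2) :=
        Finset.sum_le_sum fun i _ => Finset.sum_le_sum fun j _ => hpt i j
    _ ≤ ∑ _i : Fin (2 * k), 2 * (1 / (k : ℝ) ^ 2) := by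
        refine Finset.sum_le_sum fun i _ => ?_
        rw [← Finset.sum_mul]
        refine mul_le_mul_of_nonneg_right ?_ (by positivity)
        rw [Finset.sum_add_distrib]
        have h1 := sum_ite_le_one (fun j : Fin (2 * k) => (j : ℕ) = (i : ℕ) + 1)
          (fun a b ha hb => Fin.ext (by omega))
        have h2 := sum_ite_le_one (fun j : Fin (2 * k) => (i : ℕ) = (j : ℕ) + 1)
          (fun a b ha hb => Fin.ext (by omega))
        linarith
    _ = 4 / (k : ℝ) * ((k : ℝ) / k) := by
        rw [Finset.sum_const, Finset.card_univ, Fintype.card_fin, nsmul_eq_mul]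
        push_cast
        field_simp
        ring
    _ = 4 / (k : ℝ) := by rw [div_self (ne_of_gt hkpos), mul_one]

lemma Hm_nonneg {k : ℕ} (i j : Fin (2 * k)) : 0 ≤ Hm k i j := by
  unfold Hm; split_ifs <;> norm_num

lemma den_ge {k : ℕ} (hk : 2 ≤ k) :
    (1 / 4 : ℝ) * k ≤ ∑ i, ∑ j, Hm k i j * |xm k i - xm k j| ^ 2 := by
  have hkpos : (0 : ℝ) < k := by positivity
  have hk2 : (2 : ℝ) ≤ k := by exact_mod_cast hk
  set i0 : Fin (2 * k) := ⟨0, by omega⟩ with hi0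
  have hrow : ∀ i : Fin (2 * k), 0 ≤ ∑ j, Hm k i j * |xm k i - xm k j| ^ 2 := fun i =>
    Finset.sum_nonneg fun j _ => mul_nonneg (Hm_nonneg i j) (by positivity)
  have h1 : ∑ j, Hm k i0 j * |xm k i0 - xm k j| ^ 2 ≤
      ∑ i, ∑ j, Hm k i j * |xm k i - xm k j| ^ 2 :=
    Finset.single_le_sum (fun i _ => hrow i) (Finset.mem_univ i0)
  have h2 : ∀ j : Fin (2 * k),
      (if k ≤ (j : ℕ) then (((k : ℝ) - 1) / k) ^ 2 else 0) ≤ Hm k i0 j * |xm k i0 - xm k j| ^ 2 := by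
    intro j
    by_cases hj : k ≤ (j : ℕ)
    · rw [if_pos hj]
      have hH : Hm k i0 j = 1 := by
        unfold Hm
        rw [if_pos]
        refine ⟨?_, Or.inl rfl, Or.inr hj⟩
        intro h
        have := congrArg Fin.val h
        simp [hi0] at this
        omega
      have hx0 : xm k i0 = 1 / (k : ℝ) := by
        unfold xm
        rw [if_pos (by simp [hi0]; omega)]
        simp [hi0]
      have habs : |xm k i0 - xm k j| = ((k : ℝ) - 1) / k := by
        rw [hx0, xm_one j hj]
        have hval : 1 / (k : ℝ) - 1 = -(((k : ℝ) - 1) / k) := by field_simp; ring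
        rw [hval, abs_neg, abs_of_nonneg (div_nonneg (by linarith) (le_of_lt hkpos))]
      rw [hH, habs, one_mul]
    · rw [if_neg hj]
      exact mul_nonneg (Hm_nonneg i0 j) (by positivity)
  have h3 : ∑ j : Fin (2 * k), (if k ≤ (j : ℕ) then (((k : ℝ) - 1) / k) ^ 2 else 0)
      = k * (((k : ℝ) - 1) / k) ^ 2 := count_ge k _
  have h4 : (1 / 4 : ℝ) * k ≤ k * (((k : ℝ) - 1) / k) ^ 2 := by
    have h5 : (1 / 2 : ℝ) ≤ ((k : ℝ) - 1) / k := by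
      rw [le_div_iff₀ hkpos]; linarith
    have h6 : (1 / 4 : ℝ) ≤ (((k : ℝ) - 1) / k) ^ 2 := by nlinarith
    nlinarith [mul_le_mul_of_nonneg_left h6 (le_of_lt hkpos)]
  calc (1 / 4 : ℝ) * k ≤ k * (((k : ℝ) - 1) / k) ^ 2 := h4
    _ = ∑ j : Fin (2 * k), (if k ≤ (j : ℕ) then (((k : ℝ) - 1) / k) ^ 2 else 0) := h3.symm
    _ ≤ ∑ j, Hm k i0 j * |xm k i0 - xm k j| ^ 2 := Finset.sum_le_sum fun j _ => h2 j
    _ ≤ _ := h1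

lemma gt_le {k : ℕ} (D : ℕ) (G0 : Fin (2 * k) → Fin (2 * k) → ℝ)
    (hdeg : ∀ i, ∑ j, G0 i j ≤ (D : ℝ)) :
    (∑ i, ∑ j, Gm k G0 i j) ≤ (2 * (D : ℝ) + 4) * k := by
  have hpt : ∀ i j : Fin (2 * k), Gm k G0 i j ≤
      ((if (j : ℕ) = (i : ℕ) + 1 then (1 : ℝ) else 0) +
        (if (i : ℕ) = (j : ℕ) + 1 then (1 : ℝ) else 0)) + G0 i j := by
    intro i j
    unfold Gm
    refine add_le_add ?_ le_rfl
    by_cases hc : ((i : ℕ) + 1 = (j : ℕ) ∧ (i : ℕ) < k) ∨ ((j : ℕ) + 1 = (i : ℕ) ∧ (j : ℕ) < k)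
    · rw [if_pos hc]
      rcases hc with h | h
      · rw [if_pos h.1.symm]
        have : (0 : ℝ) ≤ if (i : ℕ) = (j : ℕ) + 1 then (1 : ℝ) else 0 := by positivity
        linarith
      · rw [if_pos h.1.symm]
        have : (0 : ℝ) ≤ if (j : ℕ) = (i : ℕ) + 1 then (1 : ℝ) else 0 := by positivity
        linarith
    · rw [if_neg hc]
      have h1 : (0 : ℝ) ≤ if (j : ℕ) = (i : ℕ) + 1 then (1 : ℝ) else 0 := by positivity
      have h2 : (0 : ℝ) ≤ if (i : ℕ) = (j : ℕ) + 1 then (1 : ℝ) else 0 := by positivity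
      linarith
  calc ∑ i, ∑ j, Gm k G0 i j
      ≤ ∑ i : Fin (2 * k), ∑ j : Fin (2 * k),
          (((if (j : ℕ) = (i : ℕ) + 1 then (1 : ℝ) else 0) +
            (if (i : ℕ) = (j : ℕ) + 1 then (1 : ℝ) else 0)) + G0 i j) :=
        Finset.sum_le_sum fun i _ => Finset.sum_le_sum fun j _ => hpt i j
    _ ≤ ∑ _i : Fin (2 * k), ((2 : ℝ) + D) := by
        refine Finset.sum_le_sum fun i _ => ?_
        rw [Finset.sum_add_distrib, Finset.sum_add_distrib]
        have h1 := sum_ite_le_one (fun j : Fin (2 * k) => (j : ℕ) = (i : ℕ) + 1)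
          (fun a b ha hb => Fin.ext (by omega))
        have h2 := sum_ite_le_one (fun j : Fin (2 * k) => (i : ℕ) = (j : ℕ) + 1)
          (fun a b ha hb => Fin.ext (by omega))
        have h3 := hdeg i
        linarith
    _ = (2 * (D : ℝ) + 4) * k - 2 * (k : ℝ) - 2 * (D : ℝ) * k + 2 * (D : ℝ) * k + 2 * (k : ℝ) := by
        rw [Finset.sum_const, Finset.card_univ, Fintype.card_fin, nsmul_eq_mul]
        push_cast
        ring
    _ = (2 * (D : ℝ) + 4) * k := by ring

lemma gt_ge {k : ℕ} (hk : 1 ≤ k) (G0 : Fin (2 * k) → Fin (2 * k) → ℝ)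
    (h01 : ∀ i j, G0 i j = 0 ∨ G0 i j = 1) :
    (k : ℝ) ≤ ∑ i, ∑ j, Gm k G0 i j := by
  have hG0nn := G0_nonneg G0 h01
  have hGnn : ∀ i j, 0 ≤ Gm k G0 i j := by
    intro i j
    unfold Gm
    have : (0 : ℝ) ≤ if ((i : ℕ) + 1 = (j : ℕ) ∧ (i : ℕ) < k) ∨ ((j : ℕ) + 1 = (i : ℕ) ∧ (j : ℕ) < k)
        then (1 : ℝ) else 0 := by positivity
    have := hG0nn i j
    linarith
  have hrow : ∀ i : Fin (2 * k), (if (i : ℕ) < k then (1 : ℝ) else 0) ≤ ∑ j, Gm k G0 i j := by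
    intro i
    by_cases hik : (i : ℕ) < k
    · rw [if_pos hik]
      have hlt : (i : ℕ) + 1 < 2 * k := by omega
      have hone : (1 : ℝ) ≤ Gm k G0 i ⟨(i : ℕ) + 1, hlt⟩ := by
        unfold Gm
        rw [if_pos (Or.inl ⟨rfl, hik⟩)]
        have := hG0nn i ⟨(i : ℕ) + 1, hlt⟩
        linarith
      exact le_trans hone (Finset.single_le_sum (fun j _ => hGnn i j) (Finset.mem_univ _))
    · rw [if_neg hik]
      exact Finset.sum_nonneg fun j _ => hGnn i j
  calc (k : ℝ) = ∑ i : Fin (2 * k), (if (i : ℕ) < k then (1 : ℝ) else 0) := by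
        rw [count_lt k 1, mul_one]
    _ ≤ ∑ i, ∑ j, Gm k G0 i j := Finset.sum_le_sum fun i _ => hrow i

lemma ht_ge {k : ℕ} (hk : 2 ≤ k) :
    (1 / 2 : ℝ) * (k : ℝ) ^ 2 ≤ ∑ i, ∑ j, Hm k i j := by
  have hk2 : (2 : ℝ) ≤ k := by exact_mod_cast hk
  have hpt : ∀ i j : Fin (2 * k),
      (if k ≤ (i : ℕ) then (1 : ℝ) else 0) * (if k ≤ (j : ℕ) then (1 : ℝ) else 0) -
        (if i = j ∧ k ≤ (i : ℕ) then (1 : ℝ) else 0) ≤ Hm k i j := by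
    intro i j
    unfold Hm
    split_ifs <;> norm_num <;> tauto
  have key : ∑ i : Fin (2 * k), ∑ j : Fin (2 * k),
      ((if k ≤ (i : ℕ) then (1 : ℝ) else 0) * (if k ≤ (j : ℕ) then (1 : ℝ) else 0) -
        (if i = j ∧ k ≤ (i : ℕ) then (1 : ℝ) else 0)) ≤ ∑ i, ∑ j, Hm k i j :=
    Finset.sum_le_sum fun i _ => Finset.sum_le_sum fun j _ => hpt i j
  have hcomp : ∑ i : Fin (2 * k), ∑ j : Fin (2 * k),
      ((if k ≤ (i : ℕ) then (1 : ℝ) else 0) * (if k ≤ (j : ℕ) then (1 : ℝ) else 0) -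
        (if i = j ∧ k ≤ (i : ℕ) then (1 : ℝ) else 0)) = (k : ℝ) * k - k := by
    have e1 : ∀ i : Fin (2 * k),
        ∑ j : Fin (2 * k), ((if k ≤ (i : ℕ) then (1 : ℝ) else 0) * (if k ≤ (j : ℕ) then (1 : ℝ) else 0) -
          (if i = j ∧ k ≤ (i : ℕ) then (1 : ℝ) else 0)) =
        (if k ≤ (i : ℕ) then (1 : ℝ) else 0) * ((k : ℝ) * 1) - (if k ≤ (i : ℕ) then (1 : ℝ) else 0) := by
      intro i
      rw [Finset.sum_sub_distrib, ← Finset.mul_sum, count_ge k 1]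
      congr 1
      by_cases hki : k ≤ (i : ℕ)
      · have : ∀ j : Fin (2 * k), (if i = j ∧ k ≤ (i : ℕ) then (1 : ℝ) else 0) =
            (if i = j then (1 : ℝ) else 0) := by
          intro j; by_cases h : i = j
          · rw [if_pos ⟨h, hki⟩, if_pos h]
          · rw [if_neg (fun hh => h hh.1), if_neg h]
        rw [Finset.sum_congr rfl fun j _ => this j, Finset.sum_ite_eq]
        simp [hki]
      · have : ∀ j : Fin (2 * k), (if i = j ∧ k ≤ (i : ℕ) then (1 : ℝ) else 0) = 0 := by
          intro j; rw [if_neg (fun hh => hki hh.2)]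
        rw [Finset.sum_congr rfl fun j _ => this j, Finset.sum_const_zero]
        simp [hki]
    rw [Finset.sum_congr rfl fun i _ => e1 i, Finset.sum_sub_distrib, ← Finset.sum_mul,
      count_ge k 1]
    ring
  rw [hcomp] at key
  nlinarith

lemma ht_le {k : ℕ} : (∑ i, ∑ j, Hm k i j) ≤ 4 * (k : ℝ) ^ 2 := by
  calc (∑ i, ∑ j, Hm k i j) ≤ ∑ _i : Fin (2 * k), ∑ _j : Fin (2 * k), (1 : ℝ) := by
        refine Finset.sum_le_sum fun i _ => Finset.sum_le_sum fun j _ => ?_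
        unfold Hm; split_ifs <;> norm_num
    _ = 4 * (k : ℝ) ^ 2 := by
        simp [Finset.sum_const, Finset.card_univ]
        push_cast
        ring


/-- The lollipop instance: `G` is a weight-1 path on `v_1, …, v_{k+1}` (0-based indices
`0, …, k` of `Fin (2k)`) together with an arbitrary graph `G0` of maximum degree at most `D`
(with at least one edge) on `{v_{k+1}, …, v_{2k}}` (indices `≥ k`), and `H` is the complete
graph on the `k+1` vertices `{v_1, v_{k+1}, …, v_{2k}}` (index `0` and indices `≥ k`). The
test vector `x_{v_i} = i/k` for `i ≤ k` and `x_{v_i} = 1` for `i > k` witnesses that the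
spectral relaxation value is `O(1/k)`, with constants depending only on `D`. -/
theorem lollipop_spectral_gap (D : ℕ) :
    ∃ C₁ c₂ C₃ c₄ C : ℝ, 0 < C₁ ∧ 0 < c₂ ∧ 0 < C₃ ∧ 0 < c₄ ∧ 0 < C ∧
    ∀ (k : ℕ), 1 ≤ k → ∀ G0 : Fin (2 * k) → Fin (2 * k) → ℝ,
      (∀ i j, G0 i j = G0 j i) →
      (∀ i j, G0 i j = 0 ∨ G0 i j = 1) →
      (∀ i, G0 i i = 0) →
      (∀ i j, G0 i j ≠ 0 → k ≤ i.val ∧ k ≤ j.val) →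
      (∀ i, ∑ j, G0 i j ≤ (D : ℝ)) →
      (∃ i j, G0 i j = 1) →
      letI G : Fin (2 * k) → Fin (2 * k) → ℝ := fun i j =>
        (if (i.val + 1 = j.val ∧ i.val < k) ∨ (j.val + 1 = i.val ∧ j.val < k)
          then (1 : ℝ) else 0) + G0 i j
      letI H : Fin (2 * k) → Fin (2 * k) → ℝ := fun i j =>
        if i ≠ j ∧ (i.val = 0 ∨ k ≤ i.val) ∧ (j.val = 0 ∨ k ≤ j.val) then (1 : ℝ) else 0
      letI x : Fin (2 * k) → ℝ := fun i => if i.val < k then ((i.val : ℝ) + 1) / k else 1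
      (∑ i, ∑ j, G i j * |x i - x j| ^ 2 ≤ C₁ / k) ∧
      (c₂ * k ≤ ∑ i, ∑ j, H i j * |x i - x j| ^ 2) ∧
      ((∑ i, ∑ j, G i j) ≤ C₃ * k) ∧
      (c₄ * (k : ℝ) ^ 2 ≤ ∑ i, ∑ j, H i j) ∧
      ((∑ i, ∑ j, (G i j / (∑ a, ∑ b, G a b)) * (x i - x j) ^ 2) /
          (∑ i, ∑ j, (H i j / (∑ a, ∑ b, H a b)) * (x i - x j) ^ 2) ≤ C / k) := by
  refine ⟨4, 1/4, 2*D+4, 1/2, 64, by norm_num, by norm_num, by positivity, by norm_num,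
    by norm_num, ?_⟩
  intro k hk G0 hsym h01 hdiag hsupp hdeg hex
  show (∑ i, ∑ j, Gm k G0 i j * |xm k i - xm k j| ^ 2 ≤ 4 / (k : ℝ)) ∧
      (1 / 4 * (k : ℝ) ≤ ∑ i, ∑ j, Hm k i j * |xm k i - xm k j| ^ 2) ∧
      ((∑ i, ∑ j, Gm k G0 i j) ≤ (2 * (D : ℝ) + 4) * k) ∧
      (1 / 2 * (k : ℝ) ^ 2 ≤ ∑ i, ∑ j, Hm k i j) ∧
      ((∑ i, ∑ j, (Gm k G0 i j / (∑ a, ∑ b, Gm k G0 a b)) * (xm k i - xm k j) ^ 2) /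
          (∑ i, ∑ j, (Hm k i j / (∑ a, ∑ b, Hm k a b)) * (xm k i - xm k j) ^ 2) ≤ 64 / (k : ℝ))
  rcases Nat.lt_or_ge k 2 with hk2 | hk2
  · exfalso
    obtain ⟨i, j, hij⟩ := hex
    obtain ⟨hi, hj⟩ := hsupp i j (by rw [hij]; norm_num)
    have hij' : i = j := Fin.ext (by have h1 := i.isLt; have h2 := j.isLt; omega)
    rw [hij', hdiag j] at hij
    norm_num at hij
  · have hkpos : (0 : ℝ) < k := by exact_mod_cast Nat.lt_of_lt_of_le Nat.zero_lt_one hk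
    have hk0 : (k : ℝ) ≠ 0 := ne_of_gt hkpos
    refine ⟨num_le hk G0 hsupp, den_ge hk2, gt_le D G0 hdeg, ht_ge hk2, ?_⟩
    have hGTge := gt_ge hk G0 h01
    have hGTpos : 0 < ∑ a, ∑ b, Gm k G0 a b := lt_of_lt_of_le hkpos hGTge
    have hHTge := ht_ge hk2
    have hHTpos : 0 < ∑ a, ∑ b, Hm k a b :=
      lt_of_lt_of_le (by positivity) hHTge
    have hNum := num_le hk G0 hsupp
    have hDen := den_ge hk2
    have e1 : (∑ i, ∑ j, (Gm k G0 i j / (∑ a, ∑ b, Gm k G0 a b)) * (xm k i - xm k j) ^ 2) =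
        (∑ i, ∑ j, Gm k G0 i j * |xm k i - xm k j| ^ 2) / (∑ a, ∑ b, Gm k G0 a b) := by
      rw [Finset.sum_div]
      refine Finset.sum_congr rfl fun i _ => ?_
      rw [Finset.sum_div]
      refine Finset.sum_congr rfl fun j _ => ?_
      rw [sq_abs, div_mul_eq_mul_div]
    have e2 : (∑ i, ∑ j, (Hm k i j / (∑ a, ∑ b, Hm k a b)) * (xm k i - xm k j) ^ 2) =
        (∑ i, ∑ j, Hm k i j * |xm k i - xm k j| ^ 2) / (∑ a, ∑ b, Hm k a b) := by
      rw [Finset.sum_div]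
      refine Finset.sum_congr rfl fun i _ => ?_
      rw [Finset.sum_div]
      refine Finset.sum_congr rfl fun j _ => ?_
      rw [sq_abs, div_mul_eq_mul_div]
    rw [e1, e2]
    have h1 : (∑ i, ∑ j, Gm k G0 i j * |xm k i - xm k j| ^ 2) / (∑ a, ∑ b, Gm k G0 a b) ≤
        4 / (k : ℝ) ^ 2 := by
      calc (∑ i, ∑ j, Gm k G0 i j * |xm k i - xm k j| ^ 2) / (∑ a, ∑ b, Gm k G0 a b)
          ≤ (4 / (k : ℝ)) / (k : ℝ) := div_le_div₀ (by positivity) hNum hkpos hGTge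
        _ = 4 / (k : ℝ) ^ 2 := by rw [div_div, ← pow_two]
    have h2 : 1 / (16 * (k : ℝ)) ≤
        (∑ i, ∑ j, Hm k i j * |xm k i - xm k j| ^ 2) / (∑ a, ∑ b, Hm k a b) := by
      have hDnn : (0 : ℝ) ≤ ∑ i, ∑ j, Hm k i j * |xm k i - xm k j| ^ 2 :=
        le_trans (by positivity) hDen
      calc 1 / (16 * (k : ℝ)) = (1 / 4 * (k : ℝ)) / (4 * (k : ℝ) ^ 2) := by
            field_simp; ring
        _ ≤ _ := div_le_div₀ hDnn hDen hHTpos ht_le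
    calc (∑ i, ∑ j, Gm k G0 i j * |xm k i - xm k j| ^ 2) / (∑ a, ∑ b, Gm k G0 a b) /
          ((∑ i, ∑ j, Hm k i j * |xm k i - xm k j| ^ 2) / (∑ a, ∑ b, Hm k a b))
        ≤ (4 / (k : ℝ) ^ 2) / (1 / (16 * (k : ℝ))) := div_le_div₀ (by positivity) h1 (by positivity) h2
      _ = 64 / (k : ℝ) := by field_simp; ring
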